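/- Fix real numbers x⁺ and x⁻ with x⁻ ≤ x⁺, integers m, k ≥ 1, n = m + k, and p̂ = m/n. For vectors u ∈ ℝ^m and v ∈ ℝ^k define C(u,v) = (1/n)·(∑_{i=1}^m (x⁺ − u_i)² + ∑_{j=1}^k (x⁻ − v_j)²), and say (u,v) misranks if max_i u_i ≤ min_j v_j. Then the infimum of C(u,v) over all misranking perturbations (u,v) equals exactly p̂(1−p̂)(x⁺ − x⁻)². -/

import Mathlib

lemma neural_collapse_aux (xp xm M K : ℝ) (hM : 0 < M) (hK : 0 < K) :
    M/(M+K) * (1 - M/(M+K)) * (xp - xm)^2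
    = 1/(M+K) * (M * (xp - (M/(M+K)*xp + (1 - M/(M+K))*xm))^2
      + K * (xm - (M/(M+K)*xp + (1 - M/(M+K))*xm))^2) := by
  have h : M + K ≠ 0 := by positivity
  field_simp
  ring

/-- Proposition 2 (exact value): for collapsed positives at `x⁺` and negatives at `x⁻`,
the infimum of the average squared transport cost over all misranking perturbations
equals exactly `p̂(1−p̂)(x⁺−x⁻)²`. -/
theorem neural_collapse_attack_exact_cost (xp xm : ℝ) (hx : xm ≤ xp)
    (m k : ℕ) (hm : 1 ≤ m) (hk : 1 ≤ k) (n : ℕ) (hn : n = m + k)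
    (phat : ℝ) (hp : phat = (m : ℝ) / (n : ℝ)) :
    sInf {c : ℝ | ∃ (u : Fin m → ℝ) (v : Fin k → ℝ),
        (∀ i j, u i ≤ v j) ∧
        c = (1 / (n : ℝ)) * ((∑ i, (xp - u i) ^ 2) + ∑ j, (xm - v j) ^ 2)}
      = phat * (1 - phat) * (xp - xm) ^ 2 := by
  subst hn
  subst hp
  have hmR : (0:ℝ) < (m:ℝ) := by exact_mod_cast Nat.lt_of_lt_of_le Nat.zero_lt_one hm
  have hkR : (0:ℝ) < (k:ℝ) := by exact_mod_cast Nat.lt_of_lt_of_le Nat.zero_lt_one hk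
  have hNcast : ((m + k : ℕ) : ℝ) = (m:ℝ) + (k:ℝ) := by push_cast; ring
  have hNR : (0:ℝ) < ((m + k : ℕ) : ℝ) := by rw [hNcast]; linarith
  set N : ℝ := ((m + k : ℕ) : ℝ) with hNdef
  set T : ℝ := (m:ℝ)/N * (1 - (m:ℝ)/N) * (xp - xm)^2 with hT
  -- lower bound for all elements
  have lb : ∀ c ∈ {c : ℝ | ∃ (u : Fin m → ℝ) (v : Fin k → ℝ),
        (∀ i j, u i ≤ v j) ∧
        c = (1 / N) * ((∑ i, (xp - u i) ^ 2) + ∑ j, (xm - v j) ^ 2)}, T ≤ c := by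
    rintro c ⟨u, v, huv, rfl⟩
    have hmne : (Finset.univ : Finset (Fin m)).Nonempty := by
      refine Finset.univ_nonempty_iff.mpr ?_
      exact ⟨⟨0, by omega⟩⟩
    set a : ℝ := Finset.univ.sup' hmne u with ha
    have hua : ∀ i, u i ≤ a := fun i => Finset.le_sup' u (Finset.mem_univ i)
    have hav : ∀ j, a ≤ v j := fun j => Finset.sup'_le hmne u (fun i _ => huv i j)
    set t : ℝ := min (max a xm) xp with ht
    have ht1 : xm ≤ t := le_min (le_max_right a xm) hx
    have ht2 : t ≤ xp := min_le_right _ _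
    have key1 : ∀ i, (xp - t)^2 ≤ (xp - u i)^2 := by
      intro i
      rcases le_or_gt a xp with h | h
      · have hmax : max a xm ≤ xp := max_le h hx
        have htval : t = max a xm := min_eq_left hmax
        have : u i ≤ t := by rw [htval]; exact le_trans (hua i) (le_max_left a xm)
        nlinarith [this, ht2]
      · have htval : t = xp := min_eq_right (le_trans h.le (le_max_left a xm))
        rw [htval]
        simp
        positivity
    have key2 : ∀ j, (xm - t)^2 ≤ (xm - v j)^2 := by
      intro j
      rcases le_or_gt xm a with h | h
      · have htv : t ≤ v j := le_trans (min_le_left _ _)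
          (by rw [max_eq_left h]; exact hav j)
        nlinarith [htv, ht1]
      · have htval : t = xm := by rw [ht, max_eq_right h.le, min_eq_left hx]
        rw [htval]
        simp
        positivity
    have s1 : (m:ℝ) * (xp - t)^2 ≤ ∑ i, (xp - u i)^2 := by
      calc (m:ℝ) * (xp - t)^2 = ∑ _i : Fin m, (xp - t)^2 := by
            simp [Finset.sum_const, Finset.card_univ]
        _ ≤ ∑ i, (xp - u i)^2 := Finset.sum_le_sum (fun i _ => key1 i)
    have s2 : (k:ℝ) * (xm - t)^2 ≤ ∑ j, (xm - v j)^2 := by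
      calc (k:ℝ) * (xm - t)^2 = ∑ _j : Fin k, (xm - t)^2 := by
            simp [Finset.sum_const, Finset.card_univ]
        _ ≤ ∑ j, (xm - v j)^2 := Finset.sum_le_sum (fun j _ => key2 j)
    have core : (m:ℝ) * k * (xp - xm)^2 ≤ N * ((m:ℝ) * (xp - t)^2 + (k:ℝ) * (xm - t)^2) := by
      rw [hNcast]
      nlinarith [sq_nonneg ((m:ℝ) * (xp - t) + (k:ℝ) * (xm - t))]
    have lb2 : T ≤ (1 / N) * ((m:ℝ) * (xp - t)^2 + (k:ℝ) * (xm - t)^2) := by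
      rw [hT]
      have hNne : N ≠ 0 := ne_of_gt hNR
      have h0 : (1:ℝ) - (m:ℝ)/N = (k:ℝ)/N := by
        have : (m:ℝ)/N + (k:ℝ)/N = 1 := by
          rw [← add_div, hNcast.symm, div_self hNne]
        linarith
      have h1 : (m:ℝ)/N * (1 - (m:ℝ)/N) * (xp - xm)^2
          = ((m:ℝ) * k * (xp - xm)^2) / (N * N) := by
        rw [h0]; field_simp
      rw [h1, one_div, inv_mul_eq_div, div_le_div_iff₀ (by positivity) hNR]
      nlinarith [mul_le_mul_of_nonneg_right core hNR.le]
    have : (1 / N) * ((m:ℝ) * (xp - t)^2 + (k:ℝ) * (xm - t)^2)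
        ≤ (1 / N) * ((∑ i, (xp - u i)^2) + ∑ j, (xm - v j)^2) := by
      apply mul_le_mul_of_nonneg_left (by linarith) (by positivity)
    linarith
  have hmem : T ∈ {c : ℝ | ∃ (u : Fin m → ℝ) (v : Fin k → ℝ),
        (∀ i j, u i ≤ v j) ∧
        c = (1 / N) * ((∑ i, (xp - u i) ^ 2) + ∑ j, (xm - v j) ^ 2)} := by
    obtain ⟨t, htdef⟩ : ∃ t : ℝ, t = (m:ℝ)/N * xp + (1 - (m:ℝ)/N) * xm := ⟨_, rfl⟩
    refine ⟨fun _ => t, fun _ => t, fun _ _ => le_refl t, ?_⟩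
    have e1 : ∑ _i : Fin m, (xp - t)^2 = (m:ℝ) * (xp - t)^2 := by
      simp [Finset.sum_const, Finset.card_univ]
    have e2 : ∑ _j : Fin k, (xm - t)^2 = (k:ℝ) * (xm - t)^2 := by
      simp [Finset.sum_const, Finset.card_univ]
    rw [hT, e1, e2, htdef, hNcast]
    exact neural_collapse_aux xp xm (m:ℝ) (k:ℝ) hmR hkR
  exact le_antisymm (csInf_le ⟨T, lb⟩ hmem) (le_csInf ⟨T, hmem⟩ lb)
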